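/- Let σ be a field automorphism of F_q with σ ≠ id. If M is an (n+1)×(n+1) matrix over F_q such that ξ·M·x^σ = 0 for every column vector x ∈ F_q^{n+1} and every row vector ξ with ξ·x = 0, then M = 0. Consequently the pure tensors x^σ·ξ (outer products of the column x^σ with the row ξ) taken over all pairs with ξ·x = 0 span the full space of (n+1)×(n+1) matrices over F_q, so the code C(Λ_σ) has dimension (n+1)². -/

import Mathlib

open Matrix

lemma aux_zero (F : Type) [Field F] (n : ℕ) (hn : 2 ≤ n)
    (σ : F ≃+* F) (a : F) (ha : σ a ≠ a)
    (M : Matrix (Fin (n + 1)) (Fin (n + 1)) F)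
    (hM : ∀ x ξ : Fin (n + 1) → F, ξ ⬝ᵥ x = 0 →
      (ξ ᵥ* M) ⬝ᵥ (fun i => σ (x i)) = 0) :
    M = 0 := by
  have key : ∀ i j : Fin (n + 1), i ≠ j → ∀ a b : F,
      (a * M i i - b * M j i) * σ b + (a * M i j - b * M j j) * σ a = 0 := by
    intro i j hij a b
    have hx : ((Pi.single i a - Pi.single j b : Fin (n+1) → F)) ⬝ᵥ ((Pi.single i b + Pi.single j a : Fin (n+1) → F)) = 0 := by
      simp [sub_dotProduct, dotProduct_add, single_dotProduct, dotProduct_single,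
        Pi.single_apply, hij, hij.symm]
      ring
    have h := hM (Pi.single i b + Pi.single j a) (Pi.single i a - Pi.single j b) hx
    have hσx : (fun k => σ ((Pi.single i b + Pi.single j a : Fin (n+1) → F) k))
        = ((Pi.single i (σ b) + Pi.single j (σ a) : Fin (n+1) → F)) := by
      funext k
      simp only [Pi.add_apply, Pi.single_apply]
      by_cases hk : k = i <;> by_cases hk' : k = j <;>
        simp_all [hij, map_add, map_zero]
    rw [hσx] at h
    rw [Matrix.sub_vecMul, Matrix.single_vecMul, Matrix.single_vecMul] at h
    simpa [dotProduct_add, dotProduct_single, Pi.sub_apply] using h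
  have off : ∀ i j : Fin (n + 1), i ≠ j → M i j = 0 := by
    intro i j hij
    have h := key i j hij 1 0
    simpa using h
  have diag : ∀ i : Fin (n + 1), M i i = 0 := by
    intro i
    obtain ⟨j, hj⟩ := Fintype.exists_ne_of_one_lt_card (by simp; omega) i
    have hij : i ≠ j := hj.symm
    have h1 := key i j hij 1 1
    rw [off i j hij, off j i hij.symm] at h1
    simp at h1
    -- h1 : M i i = M j j  (in some form)
    have hdd : M i i = M j j := by linear_combination h1
    have h2 := key i j hij a 1
    rw [off i j hij, off j i hij.symm, hdd] at h2
    simp at h2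
    -- h2 gives a * M j j - σ a * M j j = 0
    have : (a - σ a) * M j j = 0 := by linear_combination h2
    rcases mul_eq_zero.mp this with h | h
    · exact absurd (sub_eq_zero.mp h).symm ha
    · rw [hdd, h]
  ext i j
  rcases eq_or_ne i j with rfl | hij
  · simpa using diag i
  · simpa using off i j hij

theorem stmt_0 (F : Type) [Field F] [Fintype F] (n : ℕ) (hn : 2 ≤ n)
    (σ : F ≃+* F) (hσ : σ ≠ RingEquiv.refl F)
    (M : Matrix (Fin (n + 1)) (Fin (n + 1)) F)
    (hM : ∀ x ξ : Fin (n + 1) → F, ξ ⬝ᵥ x = 0 →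
      (ξ ᵥ* M) ⬝ᵥ (fun i => σ (x i)) = 0) :
    M = 0 ∧
    Submodule.span F {A : Matrix (Fin (n + 1)) (Fin (n + 1)) F |
        ∃ x ξ : Fin (n + 1) → F, ξ ⬝ᵥ x = 0 ∧ A = vecMulVec (fun i => σ (x i)) ξ} = ⊤ ∧
    Module.finrank F (Matrix (Fin (n + 1)) (Fin (n + 1)) F) = (n + 1) ^ 2 := by
  obtain ⟨a, ha⟩ : ∃ a : F, σ a ≠ a := by
    by_contra h
    push_neg at h
    exact hσ (RingEquiv.ext h)
  refine ⟨aux_zero F n hn σ a ha M hM, ?_, ?_⟩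
  · set S := {A : Matrix (Fin (n + 1)) (Fin (n + 1)) F |
        ∃ x ξ : Fin (n + 1) → F, ξ ⬝ᵥ x = 0 ∧ A = vecMulVec (fun i => σ (x i)) ξ}
    rw [Submodule.eq_top_iff']
    intro A
    rw [← Subspace.forall_mem_dualAnnihilator_apply_eq_zero_iff]
    intro φ hφ
    have hφS : ∀ B ∈ S, φ B = 0 := fun B hB =>
      (Submodule.mem_dualAnnihilator φ).mp hφ B (Submodule.subset_span hB)
    -- expansion of φ on any matrix
    have hexp : ∀ B : Matrix (Fin (n + 1)) (Fin (n + 1)) F,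
        φ B = ∑ p, ∑ q, B p q * φ (Matrix.single p q 1) := by
      intro B
      conv_lhs => rw [matrix_eq_sum_single B]
      rw [map_sum]
      refine Finset.sum_congr rfl fun p _ => ?_
      rw [map_sum]
      refine Finset.sum_congr rfl fun q _ => ?_
      rw [show Matrix.single p q (B p q) = B p q • Matrix.single p q 1 by
        rw [Matrix.smul_single, smul_eq_mul, mul_one], _root_.map_smul, smul_eq_mul]
    set N : Matrix (Fin (n + 1)) (Fin (n + 1)) F :=
      fun i j => φ (Matrix.single j i 1) with hN
    have hNM : ∀ x ξ : Fin (n + 1) → F, ξ ⬝ᵥ x = 0 →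
        (ξ ᵥ* N) ⬝ᵥ (fun i => σ (x i)) = 0 := by
      intro x ξ hξx
      have hmem : vecMulVec (fun i => σ (x i)) ξ ∈ S := ⟨x, ξ, hξx, rfl⟩
      have h0 := hφS _ hmem
      rw [hexp] at h0
      rw [← h0]
      simp only [vecMulVec_apply, hN, vecMul, dotProduct]
      refine Finset.sum_congr rfl fun p _ => ?_
      rw [Finset.sum_mul]
      exact Finset.sum_congr rfl fun q _ => by ring
    have hN0 : N = 0 := aux_zero F n hn σ a ha N hNM
    have : φ A = 0 := by
      rw [hexp]
      refine Finset.sum_eq_zero fun p _ => Finset.sum_eq_zero fun q _ => ?_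
      have : φ (Matrix.single p q 1) = N q p := rfl
      rw [this, hN0]
      simp
    exact this
  · rw [Module.finrank_matrix]
    simp [sq]
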